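/- If A = P L D (PL)ᵀ with P a permutation matrix, L unit lower triangular, and D diagonal, then the number of negative diagonal entries of D equals the number of negative eigenvalues of A (counted with multiplicity), provided all entries of D are nonzero. -/

import Mathlib

open Matrix

open Polynomial in
private lemma neg_count_le_of_congr {n : ℕ} (D E N : Matrix (Fin n) (Fin n) ℝ)
    (hD : D.IsDiag) (hE : E.IsDiag)
    (h : D = N * E * Nᵀ) :
    (Finset.univ.filter fun i => D i i < 0).card ≤
      (Finset.univ.filter fun j => E j j < 0).card := by
  classical
  set S := Finset.univ.filter fun i => D i i < 0 with hS
  set T := Finset.univ.filter fun j => E j j < 0 with hT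
  by_contra hlt
  push_neg at hlt
  let ext : (S → ℝ) →ₗ[ℝ] (Fin n → ℝ) :=
    { toFun := fun y i => if h : i ∈ S then y ⟨i, h⟩ else 0
      map_add' := by intro a b; funext i; by_cases h : i ∈ S <;> simp [h]
      map_smul' := by intro c a; funext i; by_cases h : i ∈ S <;> simp [h] }
  let φ : (S → ℝ) →ₗ[ℝ] (T → ℝ) :=
    (LinearMap.funLeft ℝ ℝ (Subtype.val : T → Fin n)) ∘ₗ Nᵀ.mulVecLin ∘ₗ ext
  have hnotinj : ¬ Function.Injective φ := by
    intro hinj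
    have := LinearMap.finrank_le_finrank_of_injective hinj
    simp only [Module.finrank_pi, Fintype.card_coe] at this
    omega
  obtain ⟨y, hy0, hyne⟩ : ∃ y : S → ℝ, φ y = 0 ∧ y ≠ 0 := by
    rw [injective_iff_map_eq_zero] at hnotinj
    push_neg at hnotinj
    obtain ⟨y, h1, h2⟩ := hnotinj
    exact ⟨y, h1, h2⟩
  set x : Fin n → ℝ := ext y with hx
  set v : Fin n → ℝ := Nᵀ *ᵥ x with hv
  have hvT : ∀ j : Fin n, j ∈ T → v j = 0 := by
    intro j hj
    have := congrFun hy0 ⟨j, hj⟩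
    simpa [φ, LinearMap.funLeft, v, x, mulVec_transpose] using this
  have hxS : ∀ i : Fin n, i ∉ S → x i = 0 := by
    intro i hi; simp [x, ext, hi]
  have key : x ⬝ᵥ (D *ᵥ x) = v ⬝ᵥ (E *ᵥ v) := by
    rw [h, hv, mul_assoc, ← mulVec_mulVec, dotProduct_mulVec, ← mulVec_transpose,
      mulVec_mulVec]
  have hlhs : x ⬝ᵥ (D *ᵥ x) < 0 := by
    have hsum : x ⬝ᵥ (D *ᵥ x) = ∑ i, D i i * (x i)^2 := by
      conv_lhs => rw [← hD.diagonal_diag]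
      simp [dotProduct, mulVec_diagonal]
      exact Finset.sum_congr rfl fun i _ => by ring
    rw [hsum]
    obtain ⟨i0, hi0⟩ : ∃ i0 : S, y i0 ≠ 0 := by
      by_contra hc; push_neg at hc; exact hyne (funext hc)
    have hterm : ∀ i ∈ Finset.univ, D i i * (x i)^2 ≤ 0 := by
      intro i _
      by_cases hi : i ∈ S
      · have hDi : D i i < 0 := (Finset.mem_filter.1 hi).2
        nlinarith [sq_nonneg (x i)]
      · rw [hxS i hi]; simp
    have hstrict : D (i0 : Fin n) (i0 : Fin n) * (x (i0 : Fin n))^2 < 0 := by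
      have hDi : D (i0 : Fin n) (i0 : Fin n) < 0 := (Finset.mem_filter.1 i0.2).2
      have hxne : x (i0 : Fin n) ≠ 0 := by
        simpa [x, ext, i0.2] using hi0
      have : (0:ℝ) < (x (i0 : Fin n))^2 := by positivity
      nlinarith
    have := Finset.sum_lt_sum (g := fun _ => (0:ℝ)) hterm
      ⟨(i0 : Fin n), Finset.mem_univ _, hstrict⟩
    simpa using this
  have hrhs : 0 ≤ v ⬝ᵥ (E *ᵥ v) := by
    have hsum : v ⬝ᵥ (E *ᵥ v) = ∑ j, E j j * (v j)^2 := by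
      conv_lhs => rw [← hE.diagonal_diag]
      simp [dotProduct, mulVec_diagonal]
      exact Finset.sum_congr rfl fun i _ => by ring
    rw [hsum]
    refine Finset.sum_nonneg fun j _ => ?_
    by_cases hj : j ∈ T
    · rw [hvT j hj]; simp
    · have : ¬ E j j < 0 := fun hc => hj (Finset.mem_filter.2 ⟨Finset.mem_univ _, hc⟩)
      have := le_of_not_gt this
      positivity
  rw [key] at hlhs
  linarith

open Polynomial in
private lemma charpoly_congr' {n : ℕ} (V B W : Matrix (Fin n) (Fin n) ℝ)
    (hVW : V * W = 1) (hWV : W * V = 1) :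
    (V * B * W).charpoly = B.charpoly := by
  have hmap : ∀ (M M' : Matrix (Fin n) (Fin n) ℝ),
      (M * M').map (C : ℝ →+* ℝ[X]) = M.map C * M'.map C := fun M M' =>
    Matrix.map_mul
  have hch : charmatrix (V * B * W) = V.map C * charmatrix B * W.map C := by
    unfold charmatrix
    simp only [RingHom.mapMatrix_apply]
    have h2 : V.map (C : ℝ →+* ℝ[X]) * B.map C * W.map C = (V*B*W).map C := by
      rw [← hmap, ← hmap]
    rw [mul_sub, sub_mul, h2]
    congr 1
    rw [← (scalar_commute (X : ℝ[X]) (fun r' => Commute.all _ _) (V.map C)).eq,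
      mul_assoc, ← hmap, hVW]
    simp
  unfold Matrix.charpoly
  rw [hch, det_mul, det_mul, mul_comm, ← mul_assoc, ← det_mul, ← hmap, hWV]
  simp

open Polynomial in
private lemma roots_charpoly_diagonal' {n : ℕ} (d : Fin n → ℝ) :
    (diagonal d).charpoly.roots = Finset.univ.val.map d := by
  have hcp : (diagonal d).charpoly = ∏ i, (X - C (d i)) := by
    unfold Matrix.charpoly
    have : charmatrix (diagonal d) = diagonal fun i => X - C (d i) := by
      ext i j
      by_cases h : i = j
      · subst h; rw [charmatrix_apply_eq]; simp
      · rw [charmatrix_apply_ne _ _ _ h, diagonal_apply_ne _ h, diagonal_apply_ne _ h]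
        simp
    rw [this, det_diagonal]
  rw [hcp, Finset.prod_eq_multiset_prod]
  have := roots_multiset_prod_X_sub_C (Finset.univ.val.map d)
  rw [Multiset.map_map] at this
  simpa using this

open Polynomial in
/-- If `A = P L D (P L)ᵀ` with `P` a permutation matrix, `L` unit lower triangular, and `D`
diagonal with nonzero entries, then the number of negative diagonal entries of `D` equals the
number of negative eigenvalues of `A` counted with multiplicity. -/
theorem ldlt_negative_inertia {n : ℕ} (A P L D : Matrix (Fin n) (Fin n) ℝ)
    (hP : ∃ σ : Equiv.Perm (Fin n), P = σ.permMatrix ℝ)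
    (hLdiag : ∀ i, L i i = 1) (hLlow : ∀ i j, i < j → L i j = 0)
    (hD : D.IsDiag) (hDnz : ∀ i, D i i ≠ 0)
    (hA : A = P * L * D * (P * L)ᵀ) :
    (Finset.univ.filter fun i => D i i < 0).card =
      Multiset.card (A.charpoly.roots.filter fun μ => μ < 0) := by
  classical
  set M : Matrix (Fin n) (Fin n) ℝ := P * L with hM
  have hDt : Dᵀ = D := by
    ext i j
    by_cases h : i = j
    · subst h; simp
    · rw [transpose_apply, hD h, hD (Ne.symm h)]
  have hAh : A.IsHermitian := by
    rw [Matrix.IsHermitian]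
    have : Aᴴ = Aᵀ := by
      ext i j; simp [conjTranspose_apply]
    rw [this, hA]
    have habs : ∀ (X Y : Matrix (Fin n) (Fin n) ℝ), Yᵀ = Y → (X * Y * Xᵀ)ᵀ = X * Y * Xᵀ := by
      intro X Y hY
      rw [transpose_mul, transpose_mul, transpose_transpose, hY, mul_assoc]
    exact habs M D hDt
  set U : Matrix (Fin n) (Fin n) ℝ := (hAh.eigenvectorUnitary : Matrix (Fin n) (Fin n) ℝ)
    with hU
  have h2 : star U * U = 1 := hAh.eigenvectorUnitary.2.1
  have h3 : U * star U = 1 := hAh.eigenvectorUnitary.2.2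
  have h4 : A = U * diagonal hAh.eigenvalues * star U := by
    simpa using hAh.spectral_theorem
  set Ed : Matrix (Fin n) (Fin n) ℝ := diagonal hAh.eigenvalues with hEd
  -- the congruence between Ed and D
  have hsUt : (star U)ᵀ = U := by
    rw [Matrix.star_eq_conjTranspose]
    ext i j; simp [conjTranspose_apply]
  set N : Matrix (Fin n) (Fin n) ℝ := star U * M with hN
  have hNt : Nᵀ = Mᵀ * U := by rw [hN, transpose_mul, hsUt]
  have hcong1 : Ed = N * D * Nᵀ := by
    have : Ed = star U * A * U := by
      rw [h4]
      rw [← mul_assoc, ← mul_assoc, h2, one_mul, mul_assoc, h2, mul_one]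
    rw [this, hA, hNt, hN]
    simp only [mul_assoc]
  -- invertibility of N
  have hdetL : L.det = 1 := by
    have hbt : L.BlockTriangular OrderDual.toDual := by
      intro i j hij
      exact hLlow i j (by simpa using hij)
    rw [Matrix.det_of_lowerTriangular L hbt]
    simp [hLdiag]
  have hdetP : IsUnit P.det := by
    obtain ⟨σ, rfl⟩ := hP
    rw [Matrix.det_permutation]
    rcases Int.units_eq_one_or (Equiv.Perm.sign σ) with h | h <;> rw [h] <;> simp
  have hdetU : IsUnit U.det ∧ IsUnit (star U).det := by
    constructor
    · exact IsUnit.of_mul_eq_one _ (by rw [← det_mul, h3, det_one])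
    · exact IsUnit.of_mul_eq_one _ (by rw [← det_mul, h2, det_one])
  have hdetM : IsUnit M.det := by
    rw [hM, det_mul, hdetL]
    simpa using hdetP
  have hdetN : IsUnit N.det := by
    rw [hN, det_mul]
    exact hdetU.2.mul hdetM
  have hdetNt : IsUnit Nᵀ.det := by rwa [det_transpose]
  have hcong2 : D = N⁻¹ * Ed * (N⁻¹)ᵀ := by
    rw [transpose_nonsing_inv, hcong1, ← mul_assoc, ← mul_assoc,
      Matrix.nonsing_inv_mul N hdetN, one_mul, mul_assoc,
      Matrix.mul_nonsing_inv Nᵀ hdetNt, mul_one]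
  -- counting
  have hEdiag : Ed.IsDiag := isDiag_diagonal _
  have hcount : (Finset.univ.filter fun i => D i i < 0).card =
      (Finset.univ.filter fun i => hAh.eigenvalues i < 0).card := by
    have l1 := neg_count_le_of_congr D Ed N⁻¹ hD hEdiag hcong2
    have l2 := neg_count_le_of_congr Ed D N hEdiag hD hcong1
    have he : (Finset.univ.filter fun i => Ed i i < 0) =
        (Finset.univ.filter fun i => hAh.eigenvalues i < 0) := by
      apply Finset.filter_congr
      intro i _
      rw [hEd, diagonal_apply_eq]
    rw [he] at l1 l2
    omega
  rw [hcount]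
  -- charpoly roots
  have hcp : A.charpoly = Ed.charpoly := by
    rw [h4]
    exact charpoly_congr' U Ed (star U) h3 h2
  rw [hcp, hEd, roots_charpoly_diagonal']
  rw [Multiset.filter_map]
  rw [Multiset.card_map]
  rw [← Finset.filter_val, Finset.card_def]
  rfl
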